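/- Let A ⊂ ℤ≥0 with 0 ∈ A and |A| = d, let Ω = ⋃_{a∈A}[a, a+1], and let Γ = {γ_0 = 0, γ_1, …, γ_{d−1}} ⊂ [0,1) be distinct reals such that Λ = Γ + ℤ is a spectrum for Ω. Partition Γ into its rational equivalence classes Γ_1, …, Γ_k, where γ_i ∼ γ_j iff γ_i − γ_j ∈ ℚ. Let Z = {n ∈ ℤ : ∑_{γ∈Γ} e^{2πiγn} = 0}, let X = {n ∈ ℤ : ∑_{γ∈Γ_j} e^{2πiγn} = 0 for every j = 1,…,k}, and let F = Z \ X. Then Γ ⊆ ℚ (equivalently, Λ ⊆ ℚ) if and only if (A − A) ∩ F = ∅. -/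

import Mathlib

open MeasureTheory Complex Classical

/-- `Λ` is a spectrum for `Ω`: the normalized exponentials
`|Ω|^{-1/2} e^{2πiλx}·1_Ω`, `λ ∈ Λ`, form a Hilbert (orthonormal) basis of `L²(Ω)`. -/
def IsSpectrum (Ω : Set ℝ) (Λ : Set ℝ) : Prop :=
  ∃ b : HilbertBasis Λ ℂ (Lp ℂ 2 (volume.restrict Ω)),
    ∀ lam : Λ,
      (b lam : ℝ → ℂ) =ᵐ[volume.restrict Ω]
        fun x => ((Real.sqrt (volume Ω).toReal : ℂ))⁻¹ *
          Complex.exp (2 * Real.pi * Complex.I * (lam : ℝ) * x)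


lemma integral_omega (A : Finset ℕ) (t : ℝ) (ht : t ≠ 0) :
    ∫ x in (⋃ a ∈ A, Set.Icc (a : ℝ) (a + 1)), Complex.exp (2 * Real.pi * Complex.I * t * x) =
      (∑ a ∈ A, Complex.exp (2 * Real.pi * Complex.I * t * a)) *
        ((Complex.exp (2 * Real.pi * Complex.I * t) - 1) / (2 * Real.pi * Complex.I * t)) := by
  set c : ℂ := 2 * Real.pi * Complex.I * t with hc
  have hc0 : c ≠ 0 := by
    refine mul_ne_zero (mul_ne_zero (mul_ne_zero two_ne_zero ?_) Complex.I_ne_zero) ?_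
    · exact Complex.ofReal_ne_zero.2 Real.pi_ne_zero
    · exact Complex.ofReal_ne_zero.2 ht
  -- replace Icc by Ico (a.e. equal)
  have hae : (⋃ a ∈ A, Set.Icc (a : ℝ) (a + 1)) =ᵐ[volume] (⋃ a ∈ A, Set.Ico (a : ℝ) (a + 1)) := by
    refine MeasureTheory.ae_eq_set.2 ⟨?_, ?_⟩
    · refine measure_mono_null (t := ⋃ a ∈ A, ({((a : ℝ) + 1)} : Set ℝ)) ?_ ?_
      · intro x hx
        simp only [Set.mem_diff, Set.mem_iUnion] at hx ⊢
        obtain ⟨⟨a, ha, hx1⟩, hx2⟩ := hx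
        refine ⟨a, ha, ?_⟩
        have : ¬ x ∈ Set.Ico (a : ℝ) (a + 1) := fun h => hx2 ⟨a, ha, h⟩
        simp only [Set.mem_Ico, Set.mem_Icc] at *
        have h3 := not_lt.mp (not_and.mp this hx1.1)
        simp only [Set.mem_singleton_iff]
        linarith [hx1.2]
      · refine measure_biUnion_null_iff (A.countable_toSet) |>.2 ?_
        intro a _; exact measure_singleton _
    · refine measure_mono_null (fun x hx => ?_) (measure_empty (μ := volume))
      exfalso
      simp only [Set.mem_diff, Set.mem_iUnion] at hx
      obtain ⟨⟨a, ha, hx1⟩, hx2⟩ := hx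
      exact hx2 ⟨a, ha, hx1.1, le_of_lt hx1.2⟩
  rw [MeasureTheory.setIntegral_congr_set hae]
  rw [MeasureTheory.integral_biUnion_finset A (fun a _ => measurableSet_Ico)
    ?_ (fun a _ => ((show Continuous (fun x : ℝ => Complex.exp (c * x)) by fun_prop).integrableOn_Icc.mono_set Set.Ico_subset_Icc_self))]
  · rw [Finset.sum_mul]
    refine Finset.sum_congr rfl (fun a _ => ?_)
    show (∫ x in Set.Ico (a:ℝ) (a+1), Complex.exp (c * x)) = _
    rw [MeasureTheory.integral_Ico_eq_integral_Ioo, ← MeasureTheory.integral_Ioc_eq_integral_Ioo,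
      ← intervalIntegral.integral_of_le (by linarith : (a:ℝ) ≤ (a:ℝ)+1)]
    rw [integral_exp_mul_complex hc0]
    push_cast
    rw [mul_add, Complex.exp_add, mul_one]
    field_simp
  · intro a ha b hb hab
    simp only [Function.onFun, Set.Ico_disjoint_Ico]
    simp only [Finset.mem_coe] at ha hb
    rcases lt_or_gt_of_ne (fun h : a = b => hab (by exact_mod_cast h)) with h | h
    · have : (a : ℝ) + 1 ≤ b := by exact_mod_cast Nat.succ_le_of_lt h
      calc min ((a:ℝ)+1) ((b:ℝ)+1) ≤ (a:ℝ)+1 := min_le_left _ _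
        _ ≤ (b : ℝ) := this
        _ ≤ max (a:ℝ) (b:ℝ) := le_max_right _ _
    · have : (b : ℝ) + 1 ≤ a := by exact_mod_cast Nat.succ_le_of_lt h
      calc min ((a:ℝ)+1) ((b:ℝ)+1) ≤ (b:ℝ)+1 := min_le_right _ _
        _ ≤ (a : ℝ) := this
        _ ≤ max (a:ℝ) (b:ℝ) := le_max_left _ _

lemma rowOrth (d : ℕ) (hd : 0 < d) (A : Finset ℕ) (h0A : 0 ∈ A)
    (γ : Fin d → ℝ) (hinj : Function.Injective γ)
    (hrange : ∀ j, γ j ∈ Set.Ico (0 : ℝ) 1)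
    (hspec : IsSpectrum (⋃ a ∈ A, Set.Icc (a : ℝ) (a + 1))
      {x : ℝ | ∃ j : Fin d, ∃ n : ℤ, x = γ j + n})
    (j j' : Fin d) (hjj : j ≠ j') :
    ∑ a ∈ A, Complex.exp (2 * Real.pi * Complex.I * ((γ j - γ j') : ℝ) * a) = 0 := by
  classical
  set Ω : Set ℝ := ⋃ a ∈ A, Set.Icc (a : ℝ) (a + 1) with hΩ
  have hvol_lb : (1 : ENNReal) ≤ volume Ω := by
    have hsub : Set.Icc (0:ℝ) 1 ⊆ Ω := by
      intro x hx
      refine Set.mem_biUnion h0A ?_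
      simpa using hx
    calc (1 : ENNReal) = volume (Set.Icc (0:ℝ) 1) := by simp [Real.volume_Icc]
      _ ≤ volume Ω := measure_mono hsub
  have hvol_ub : volume Ω ≠ ⊤ := by
    refine ((measure_biUnion_finset_le A _).trans_lt ?_).ne
    have h1 : ∀ a ∈ A, volume (Set.Icc (a:ℝ) (a+1)) = 1 := by
      intro a _; simp [Real.volume_Icc]
    rw [Finset.sum_congr rfl h1, Finset.sum_const, nsmul_eq_mul, mul_one]
    exact ENNReal.natCast_lt_top _
  have hv : 0 < (volume Ω).toReal :=
    ENNReal.toReal_pos (fun h => by simp [h] at hvol_lb) hvol_ub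
  set c : ℂ := ((Real.sqrt (volume Ω).toReal : ℝ) : ℂ)⁻¹ with hcdef
  have hcne : c ≠ 0 := by
    simp only [hcdef, ne_eq, inv_eq_zero, Complex.ofReal_eq_zero]
    exact (Real.sqrt_pos.2 hv).ne'
  obtain ⟨b, hb⟩ := hspec
  have hmem : ∀ i : Fin d, γ i ∈ {x : ℝ | ∃ j : Fin d, ∃ n : ℤ, x = γ j + n} :=
    fun i => ⟨i, 0, by simp⟩
  set lam : {x : ℝ | ∃ j : Fin d, ∃ n : ℤ, x = γ j + n} := ⟨γ j, hmem j⟩ with hlam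
  set lam' : {x : ℝ | ∃ j : Fin d, ∃ n : ℤ, x = γ j + n} := ⟨γ j', hmem j'⟩ with hlam'
  have hne : lam' ≠ lam := by
    simp only [hlam, hlam', ne_eq, Subtype.mk.injEq]
    exact fun h => hjj (hinj h).symm
  have horth : (inner ℂ (b lam') (b lam) : ℂ) = 0 := b.orthonormal.2 hne
  rw [MeasureTheory.L2.inner_def] at horth
  set t : ℝ := γ j - γ j' with htdef
  have ht0 : t ≠ 0 := sub_ne_zero.2 (fun h => hjj (hinj h))
  have heq : (fun x : ℝ => (inner ℂ ((b lam' : ℝ → ℂ) x) ((b lam : ℝ → ℂ) x) : ℂ))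
      =ᵐ[volume.restrict Ω] fun x : ℝ => c^2 * Complex.exp (2 * Real.pi * Complex.I * t * x) := by
    filter_upwards [hb lam', hb lam] with x h1 h2
    rw [h1, h2]
    simp only [RCLike.inner_apply, map_mul, map_inv₀, Complex.conj_ofReal, ← Complex.exp_conj,
      map_ofNat, Complex.conj_I]
    rw [show (2 * (Real.pi:ℂ) * -I * ((γ j' : ℝ):ℂ) * (x:ℂ)) = -(2 * Real.pi * I * ((γ j':ℝ):ℂ) * x) by ring]
    rw [mul_mul_mul_comm, ← Complex.exp_add, ← sq]
    congr 1
    push_cast [htdef, hlam]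
    ring_nf
  rw [MeasureTheory.integral_congr_ae heq] at horth
  rw [MeasureTheory.integral_const_mul] at horth
  rw [integral_omega A t ht0] at horth
  have h2piI : (2 * (Real.pi:ℂ) * I) ≠ 0 :=
    mul_ne_zero (mul_ne_zero two_ne_zero (Complex.ofReal_ne_zero.2 Real.pi_ne_zero)) Complex.I_ne_zero
  have hKnum : Complex.exp (2 * Real.pi * Complex.I * t) - 1 ≠ 0 := by
    rw [sub_ne_zero]
    intro h
    obtain ⟨n, hn⟩ := Complex.exp_eq_one_iff.1 h
    have h2 : ((t:ℝ):ℂ) = (n:ℂ) :=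
      mul_left_cancel₀ h2piI (by linear_combination hn)
    have h3 : t = (n:ℝ) := by exact_mod_cast h2
    have hj := hrange j
    have hj' := hrange j'
    simp only [Set.mem_Ico] at hj hj'
    have hlt : (-1:ℝ) < (n:ℝ) := by rw [← h3, htdef]; linarith
    have hlt2 : ((n:ℝ)) < 1 := by rw [← h3, htdef]; linarith
    have hn0 : n = 0 := by
      have hb1 : (-1:ℤ) < n := by exact_mod_cast hlt
      have hb2 : n < (1:ℤ) := by exact_mod_cast hlt2
      omega
    rw [hn0] at h3
    simp at h3
    exact ht0 h3
  have hK : (Complex.exp (2 * Real.pi * Complex.I * t) - 1) / (2 * Real.pi * Complex.I * t) ≠ 0 :=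
    div_ne_zero hKnum (mul_ne_zero h2piI (Complex.ofReal_ne_zero.2 ht0))
  have hS := (mul_eq_zero.1 horth).resolve_left (pow_ne_zero 2 hcne)
  exact (mul_eq_zero.1 hS).resolve_right hK


lemma colOrth (d : ℕ) (hd : 0 < d) (A : Finset ℕ) (hcard : A.card = d)
    (γ : Fin d → ℝ)
    (hrow : ∀ j j' : Fin d, j ≠ j' →
      ∑ a ∈ A, Complex.exp (2 * Real.pi * Complex.I * ((γ j - γ j') : ℝ) * a) = 0)
    (a : ℕ) (ha : a ∈ A) (b : ℕ) (hb : b ∈ A) (hab : a ≠ b) :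
    ∑ j : Fin d, Complex.exp (2 * Real.pi * Complex.I * γ j * (((a : ℤ) - (b : ℤ) : ℤ) : ℂ)) = 0 := by
  classical
  have hAcard : Fintype.card {x // x ∈ A} = d := by simp [hcard]
  set e : Fin d ≃ {x // x ∈ A} := (Fintype.equivFinOfCardEq hAcard).symm with he
  set M : Matrix (Fin d) (Fin d) ℂ :=
    fun j k => Complex.exp (2 * Real.pi * Complex.I * γ j * ((e k : ℕ) : ℂ)) with hM
  have hMM : M * M.conjTranspose = (d : ℂ) • 1 := by
    ext j j'
    simp only [Matrix.mul_apply, Matrix.conjTranspose_apply, Matrix.smul_apply, Matrix.one_apply]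
    have hterm : ∀ k : Fin d, M j k * star (M j' k) =
        Complex.exp (2 * Real.pi * Complex.I * ((γ j - γ j') : ℝ) * ((e k : ℕ) : ℂ)) := by
      intro k
      simp only [hM, RCLike.star_def, ← Complex.exp_conj, map_mul, map_ofNat, Complex.conj_ofReal,
        Complex.conj_I, Complex.conj_natCast]
      rw [← Complex.exp_add]
      congr 1
      push_cast
      ring
    rw [Finset.sum_congr rfl (fun k _ => hterm k)]
    by_cases hjj : j = j'
    · subst hjj
      simp only [if_pos rfl, smul_eq_mul, mul_one]
      have : ∀ k : Fin d, Complex.exp (2 * Real.pi * Complex.I * ((γ j - γ j) : ℝ) * ((e k : ℕ) : ℂ)) = 1 := by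
        intro k; simp
      rw [Finset.sum_congr rfl (fun k _ => this k)]
      simp
    · rw [if_neg hjj, smul_eq_mul, mul_zero]
      have h := hrow j j' hjj
      rw [Equiv.sum_comp e (fun s : {x // x ∈ A} => Complex.exp (2 * Real.pi * Complex.I * ((γ j - γ j') : ℝ) * ((s : ℕ) : ℂ))),
        Finset.sum_coe_sort A (fun s => Complex.exp (2 * Real.pi * Complex.I * ((γ j - γ j') : ℝ) * ((s : ℕ) : ℂ)))]
      exact h
  -- deduce column orthogonality
  have hd0 : (d : ℂ) ≠ 0 := Nat.cast_ne_zero.2 hd.ne'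
  have h1 : M * ((d : ℂ)⁻¹ • M.conjTranspose) = 1 := by
    rw [Matrix.mul_smul, hMM, smul_smul, inv_mul_cancel₀ hd0, one_smul]
  have h2 : ((d : ℂ)⁻¹ • M.conjTranspose) * M = 1 := mul_eq_one_comm.1 h1
  have hMM2 : M.conjTranspose * M = (d : ℂ) • 1 := by
    calc M.conjTranspose * M = (d : ℂ) • (((d : ℂ)⁻¹ • M.conjTranspose) * M) := by
          rw [Matrix.smul_mul, smul_smul, mul_inv_cancel₀ hd0, one_smul]
      _ = (d : ℂ) • 1 := by rw [h2]
  set k : Fin d := e.symm ⟨b, hb⟩ with hk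
  set k' : Fin d := e.symm ⟨a, ha⟩ with hk'
  have hkk : k ≠ k' := by
    simp only [hk, hk', ne_eq, EmbeddingLike.apply_eq_iff_eq, Subtype.mk.injEq]
    exact fun h => hab h.symm
  have hentry := congrFun (congrFun hMM2 k) k'
  simp only [Matrix.mul_apply, Matrix.conjTranspose_apply, Matrix.smul_apply,
    Matrix.one_apply, if_neg hkk, smul_eq_mul, mul_zero] at hentry
  rw [← hentry]
  refine Finset.sum_congr rfl (fun j _ => ?_)
  simp only [hM, hk, hk', Equiv.apply_symm_apply, RCLike.star_def, ← Complex.exp_conj, map_mul,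
    map_ofNat, Complex.conj_ofReal, Complex.conj_I, Complex.conj_natCast]
  rw [← Complex.exp_add]
  congr 1
  push_cast
  ring


theorem stmt2 (d : ℕ) (hd : 0 < d) (A : Finset ℕ) (h0A : 0 ∈ A) (hcard : A.card = d)
    (γ : Fin d → ℝ) (hγ0 : γ ⟨0, hd⟩ = 0) (hinj : Function.Injective γ)
    (hrange : ∀ j, γ j ∈ Set.Ico (0 : ℝ) 1)
    (hspec : IsSpectrum (⋃ a ∈ A, Set.Icc (a : ℝ) (a + 1))
      {x : ℝ | ∃ j : Fin d, ∃ n : ℤ, x = γ j + n}) :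
    -- Z : integer zero set of δ̂_Γ
    -- X : common integer zeros of the subsums over the rational equivalence classes
    -- F = Z \ X
    ((∀ j, ∃ q : ℚ, γ j = (q : ℝ)) ↔
      ∀ a ∈ A, ∀ b ∈ A, ((a : ℤ) - (b : ℤ)) ∉
        ({n : ℤ | ∑ j : Fin d, Complex.exp (2 * Real.pi * Complex.I * γ j * n) = 0} \
         {n : ℤ | ∀ j₀ : Fin d,
            ∑ j ∈ Finset.univ.filter (fun i : Fin d => ∃ q : ℚ, γ i - γ j₀ = (q : ℝ)),
              Complex.exp (2 * Real.pi * Complex.I * γ j * n) = 0})) := by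
  classical
  have hrow : ∀ j j' : Fin d, j ≠ j' →
      ∑ a ∈ A, Complex.exp (2 * Real.pi * Complex.I * ((γ j - γ j') : ℝ) * a) = 0 :=
    fun j j' hjj => rowOrth d hd A h0A γ hinj hrange hspec j j' hjj
  constructor
  · -- forward: all rational ⇒ F ∩ (A−A) = ∅
    intro hrat a ha b hb hmem
    obtain ⟨hZ, hX⟩ := hmem
    refine hX ?_
    intro j₀
    have hfil : Finset.univ.filter (fun i : Fin d => ∃ q : ℚ, γ i - γ j₀ = (q : ℝ)) =
        Finset.univ := by
      refine Finset.filter_true_of_mem (fun i _ => ?_)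
      obtain ⟨qi, hqi⟩ := hrat i
      obtain ⟨q0, hq0⟩ := hrat j₀
      exact ⟨qi - q0, by push_cast [hqi, hq0]; ring⟩
    rw [hfil]
    exact hZ
  · -- backward
    intro H j
    set i₀ : Fin d := ⟨0, hd⟩ with hi₀
    set C : Finset (Fin d) :=
      Finset.univ.filter (fun i : Fin d => ∃ q : ℚ, γ i - γ i₀ = (q : ℝ)) with hC
    have hi₀C : i₀ ∈ C := Finset.mem_filter.2 ⟨Finset.mem_univ _, ⟨0, by simp⟩⟩
    have hXab : ∀ a ∈ A, ∀ b ∈ A, a ≠ b →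
        ∑ i ∈ C, Complex.exp (2 * Real.pi * Complex.I * γ i * (((a : ℤ) - (b : ℤ) : ℤ) : ℂ)) = 0 := by
      intro a ha b hb hab
      have hz : ∑ jj : Fin d,
          Complex.exp (2 * Real.pi * Complex.I * γ jj * (((a : ℤ) - (b : ℤ) : ℤ) : ℂ)) = 0 :=
        colOrth d hd A hcard γ hrow a ha b hb hab
      have hnot := H a ha b hb
      have hx : ((a : ℤ) - (b : ℤ)) ∈ {n : ℤ | ∀ j₀ : Fin d,
          ∑ j ∈ Finset.univ.filter (fun i : Fin d => ∃ q : ℚ, γ i - γ j₀ = (q : ℝ)),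
            Complex.exp (2 * Real.pi * Complex.I * γ j * n) = 0} := by
        by_contra hxx
        exact hnot ⟨hz, hxx⟩
      exact hx i₀
    -- double counting
    have key1 : ∑ a ∈ A, ∑ b ∈ A, ∑ i ∈ C,
        Complex.exp (2 * Real.pi * Complex.I * γ i * (((a : ℤ) - (b : ℤ) : ℤ) : ℂ))
        = (d : ℂ) * C.card := by
      have hinner : ∀ a ∈ A, (∑ b ∈ A, ∑ i ∈ C,
          Complex.exp (2 * Real.pi * Complex.I * γ i * (((a : ℤ) - (b : ℤ) : ℤ) : ℂ)))
          = (C.card : ℂ) := by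
        intro a ha
        rw [Finset.sum_eq_single a]
        · simp
        · intro b hb hba
          exact hXab a ha b hb (fun h => hba h.symm)
        · intro h; exact absurd ha h
      rw [Finset.sum_congr rfl hinner, Finset.sum_const, hcard, nsmul_eq_mul]
    have key2 : ∑ a ∈ A, ∑ b ∈ A, ∑ i ∈ C,
        Complex.exp (2 * Real.pi * Complex.I * γ i * (((a : ℤ) - (b : ℤ) : ℤ) : ℂ))
        = (d : ℂ) * d := by
      have hswap : ∑ a ∈ A, ∑ b ∈ A, ∑ i ∈ C,
          Complex.exp (2 * Real.pi * Complex.I * γ i * (((a : ℤ) - (b : ℤ) : ℤ) : ℂ))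
          = ∑ i ∈ C, ∑ a ∈ A, ∑ b ∈ A,
          Complex.exp (2 * Real.pi * Complex.I * γ i * (((a : ℤ) - (b : ℤ) : ℤ) : ℂ)) := by
        rw [Finset.sum_congr rfl (fun a _ => Finset.sum_comm)]
        exact Finset.sum_comm
      rw [hswap]
      have hprod : ∀ i ∈ C, (∑ a ∈ A, ∑ b ∈ A,
          Complex.exp (2 * Real.pi * Complex.I * γ i * (((a : ℤ) - (b : ℤ) : ℤ) : ℂ)))
          = (∑ a ∈ A, Complex.exp (2 * Real.pi * Complex.I * γ i * a)) *
            (∑ b ∈ A, Complex.exp (-(2 * Real.pi * Complex.I * γ i * b))) := by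
        intro i _
        rw [Finset.sum_mul_sum]
        refine Finset.sum_congr rfl (fun a _ => Finset.sum_congr rfl (fun b _ => ?_))
        rw [← Complex.exp_add]
        congr 1
        push_cast
        ring
      rw [Finset.sum_congr rfl hprod]
      rw [Finset.sum_eq_single i₀]
      · rw [hγ0]
        push_cast
        simp [hcard]
      · intro i hiC hii
        have h0 : ∑ a ∈ A, Complex.exp (2 * Real.pi * Complex.I * γ i * a) = 0 := by
          have := hrow i i₀ hii
          rw [hγ0] at this
          simpa using this
        rw [h0, zero_mul]
      · intro h; exact absurd hi₀C h
    have hcardC : (C.card : ℂ) = (d : ℂ) := by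
      have hd0 : (d : ℂ) ≠ 0 := Nat.cast_ne_zero.2 hd.ne'
      exact mul_left_cancel₀ hd0 (key1.symm.trans key2)
    have hCcard : C.card = d := by exact_mod_cast hcardC
    have hCuniv : C = Finset.univ := Finset.eq_univ_of_card C (by simp [hCcard])
    have hjC : j ∈ C := hCuniv ▸ Finset.mem_univ j
    obtain ⟨q, hq⟩ := (Finset.mem_filter.1 hjC).2
    rw [hγ0] at hq
    exact ⟨q, by linarith⟩
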